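/- Define Q(m,n) = (n^{2n}/n!²) ∑_{m-sparse χ} |\widehat{1_S}(χ)|² (sum over characters with exactly m nonzero coordinates). Then n^m/m! = ∑_{k=0}^{m} C(n−k, m−k) Q(k,n), and consequently Q(m,n) = ∑_{k=0}^m (−1)^{m−k} C(n−k, m−k) n^k/k!. -/

import Mathlib

set_option maxHeartbeats 1000000
set_option linter.unusedSectionVars false

open Finset

/-- `e(x) = exp(2πi x/n)` for `x ∈ ZMod n`, realizing the identification of the dual of
`ZMod n` with `(1/n)ℤ/ℤ`. -/
noncomputable def eZ (n : ℕ) (x : ZMod n) : ℂ :=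
  Complex.exp (2 * Real.pi * Complex.I * (x.val : ℂ) / (n : ℂ))

section ez
variable (n : ℕ) [NeZero n]

noncomputable def zet (n : ℕ) : ℂ := Complex.exp (2 * Real.pi * Complex.I / n)

lemma zet_prim : IsPrimitiveRoot (zet n) n := Complex.isPrimitiveRoot_exp n (NeZero.ne n)

lemma eZ_eq_pow (x : ZMod n) : eZ n x = zet n ^ x.val := by
  rw [eZ, zet, ← Complex.exp_nat_mul]
  congr 1
  ring

lemma zet_pow_mod (k : ℕ) : zet n ^ k = zet n ^ (k % n) := by
  conv_lhs => rw [← Nat.mod_add_div k n, pow_add, pow_mul, (zet_prim n).pow_eq_one, one_pow, mul_one]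

lemma eZ_zero : eZ n 0 = 1 := by
  simp [eZ_eq_pow]

lemma eZ_add (a b : ZMod n) : eZ n (a + b) = eZ n a * eZ n b := by
  rw [eZ_eq_pow, eZ_eq_pow, eZ_eq_pow, ← pow_add]
  rw [zet_pow_mod n ((a+b).val), zet_pow_mod n (a.val + b.val), ZMod.val_add,
    Nat.mod_mod_of_dvd _ dvd_rfl]

lemma eZ_mul_pow (r z : ZMod n) : eZ n (r * z) = eZ n z ^ r.val := by
  rw [eZ_eq_pow, eZ_eq_pow, ← pow_mul, zet_pow_mod n ((r*z).val), zet_pow_mod n (z.val * r.val)]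
  rw [ZMod.val_mul, Nat.mul_comm, Nat.mod_mod_of_dvd _ dvd_rfl]

lemma eZ_sum {ι : Type*} (s : Finset ι) (f : ι → ZMod n) :
    eZ n (∑ i ∈ s, f i) = ∏ i ∈ s, eZ n (f i) := by
  induction s using Finset.cons_induction with
  | empty => simp [eZ_zero]
  | cons a s ha ih => rw [Finset.sum_cons, Finset.prod_cons, eZ_add, ih]

lemma eZ_abs (x : ZMod n) : ‖eZ n x‖ = 1 := by
  rw [eZ_eq_pow, norm_pow, zet, Complex.norm_exp]
  have : (2 * Real.pi * Complex.I / n).re = 0 := by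
    simp [Complex.div_re]
  rw [this, Real.exp_zero, one_pow]

lemma eZ_ne_zero (x : ZMod n) : eZ n x ≠ 0 := by
  intro h
  have := eZ_abs n x
  rw [h] at this; simp at this

lemma eZ_conj (x : ZMod n) : (starRingEnd ℂ) (eZ n x) = eZ n (-x) := by
  have h1 : eZ n x * eZ n (-x) = 1 := by rw [← eZ_add]; simp [eZ_zero]
  have h3 := eZ_ne_zero n x
  calc (starRingEnd ℂ) (eZ n x) = (eZ n x)⁻¹ * (eZ n x * (starRingEnd ℂ) (eZ n x)) := by
        field_simp
    _ = (eZ n x)⁻¹ := by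
        rw [Complex.mul_conj, ← Complex.sq_norm, eZ_abs]; simp
    _ = eZ n (-x) := inv_eq_of_mul_eq_one_left (by rw [mul_comm] at h1; exact h1)

lemma sum_eZ_mul (z : ZMod n) :
    ∑ r : ZMod n, eZ n (r * z) = if z = 0 then (n : ℂ) else 0 := by
  have hcast : ∑ r : ZMod n, eZ n (r * z) = ∑ j ∈ Finset.range n, eZ n z ^ j := by
    rw [Finset.sum_congr rfl (fun r _ => eZ_mul_pow n r z)]
    apply Finset.sum_nbij' (f := fun r : ZMod n => eZ n z ^ r.val) (g := fun j => eZ n z ^ j)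
      (i := fun r => r.val) (j := fun j => (j : ZMod n))
    · intro a _; exact Finset.mem_range.mpr (ZMod.val_lt a)
    · intro a _; exact Finset.mem_univ _
    · intro a _; simp [ZMod.natCast_val, ZMod.cast_id]
    · intro j hj; exact ZMod.val_natCast_of_lt (Finset.mem_range.mp hj)
    · intro a _; rfl
  rw [hcast]
  by_cases hz : z = 0
  · simp [hz, eZ_zero]
  · rw [if_neg hz]
    have hne1 : eZ n z ≠ 1 := by
      rw [eZ_eq_pow]
      intro h
      have hdvd := ((zet_prim n).pow_eq_one_iff_dvd z.val).mp h
      have hlt := ZMod.val_lt z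
      have hne : z.val ≠ 0 := fun h0 => hz ((ZMod.val_eq_zero z).mp h0)
      rcases hdvd with ⟨c, hc⟩
      rcases Nat.eq_zero_or_pos c with h0 | h0
      · rw [h0, Nat.mul_zero] at hc; exact hne hc
      · have : n ≤ z.val := by
          rw [hc]; exact Nat.le_mul_of_pos_right n h0
        omega
    rw [geom_sum_eq hne1]
    have hpow : eZ n z ^ n = 1 := by
      rw [eZ_eq_pow, ← pow_mul, mul_comm, pow_mul, (zet_prim n).pow_eq_one, one_pow]
    rw [hpow]
    simp

end ez

/-- The Fourier coefficient `\widehat{1_S}(r₁,…,r_n)` of the set `S` of injective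
`n`-tuples in `(ZMod n)ⁿ`, namely `n^{-n} ∑_{x ∈ S} e(-∑ᵢ rᵢ xᵢ)`. -/
noncomputable def fourierS (n : ℕ) [NeZero n] (r : Fin n → ZMod n) : ℂ :=
  ((n : ℂ) ^ n)⁻¹ *
    ∑ x ∈ Finset.univ.filter (fun x : Fin n → ZMod n => Function.Injective x),
      eZ n (-(∑ i, r i * x i))

section counting
variable (n : ℕ) [NeZero n]

lemma card_inj :
    (univ.filter (fun x : Fin n → ZMod n => Function.Injective x)).card = n.factorial := by
  rw [← Fintype.card_subtype]
  rw [Fintype.card_congr (Equiv.subtypeInjectiveEquivEmbedding (Fin n) (ZMod n))]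
  rw [Fintype.card_embedding_eq, ZMod.card, Fintype.card_fin, Nat.descFactorial_self]

lemma card_ext (T : Finset (Fin n)) (x : Fin n → ZMod n) (hx : Function.Injective x) :
    (univ.filter (fun y : Fin n → ZMod n =>
        Function.Injective y ∧ ∀ i ∈ T, y i = x i)).card = (n - T.card).factorial := by
  have hcard : Fintype.card (Fin n) = Fintype.card (ZMod n) := by simp [ZMod.card]
  have hb : Function.Bijective x :=
    (Fintype.bijective_iff_injective_and_card x).2 ⟨hx, hcard⟩
  set ex := Equiv.ofBijective x hb with hex
  have e1 : {y : Fin n → ZMod n // Function.Injective y ∧ ∀ i ∈ T, y i = x i}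
      ≃ {σ : Equiv.Perm (Fin n) // ∀ i, ¬ (i ∉ T) → σ i = i} := by
    refine ⟨fun y => ⟨(Equiv.ofBijective y.1
        ((Fintype.bijective_iff_injective_and_card y.1).2 ⟨y.2.1, hcard⟩)).trans ex.symm,
        fun i hi => ?_⟩,
      fun σ => ⟨fun i => x (σ.1 i), hx.comp σ.1.injective, fun i hi => ?_⟩, ?_, ?_⟩
    · have hiT : i ∈ T := not_not.mp hi
      have : y.1 i = x i := y.2.2 i hiT
      simp only [Equiv.trans_apply, Equiv.ofBijective_apply, this]
      exact ex.symm_apply_apply i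
    · show x (σ.1 i) = x i
      rw [σ.2 i (not_not.mpr hi)]
    · intro y
      apply Subtype.ext
      funext i
      simp only [Equiv.trans_apply, Equiv.ofBijective_apply]
      exact ex.apply_symm_apply _
    · intro σ
      apply Subtype.ext
      apply Equiv.ext
      intro i
      simp only [Equiv.trans_apply, Equiv.ofBijective_apply]
      exact ex.symm_apply_apply _
  rw [← Fintype.card_subtype, Fintype.card_congr e1,
    Fintype.card_congr (Equiv.Perm.subtypeEquivSubtypePerm (fun i => i ∉ T)).symm,
    Fintype.card_perm, Fintype.card_subtype_compl, Fintype.card_fin, Fintype.card_coe]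

lemma card_supersets (m : ℕ) (s : Finset (Fin n)) (hs : s.card ≤ m) :
    (((univ : Finset (Fin n)).powersetCard m).filter (fun T => s ⊆ T)).card
      = Nat.choose (n - s.card) (m - s.card) := by
  have := Finset.card_powersetCard (m - s.card) ((univ : Finset (Fin n)) \ s)
  rw [Finset.card_sdiff_of_subset (Finset.subset_univ s), Finset.card_univ, Fintype.card_fin] at this
  rw [← this]
  apply Finset.card_bij' (fun T _ => T \ s) (fun U _ => U ∪ s)
  · intro T hT
    rw [Finset.mem_filter, Finset.mem_powersetCard] at hT
    rw [Finset.mem_powersetCard]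
    exact ⟨Finset.sdiff_subset_sdiff hT.1.1 le_rfl,
      by rw [Finset.card_sdiff_of_subset hT.2, hT.1.2]⟩
  · intro U hU
    rw [Finset.mem_powersetCard] at hU
    have hdisj : Disjoint U s := by
      intro a haU has
      intro b hb
      have h1 := hU.1 (haU hb)
      rw [Finset.mem_sdiff] at h1
      exact absurd (has hb) h1.2
    rw [Finset.mem_filter, Finset.mem_powersetCard]
    refine ⟨⟨Finset.subset_univ _, ?_⟩, Finset.subset_union_right⟩
    rw [Finset.card_union_of_disjoint hdisj, hU.2]
    omega
  · intro T hT
    rw [Finset.mem_filter] at hT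
    exact Finset.sdiff_union_of_subset hT.2
  · intro U hU
    rw [Finset.mem_powersetCard] at hU
    have hdisj : Disjoint U s := by
      intro a haU has b hb
      have h1 := hU.1 (haU hb)
      rw [Finset.mem_sdiff] at h1
      exact absurd (has hb) h1.2
    rw [Finset.union_sdiff_right, Finset.sdiff_eq_self_of_disjoint hdisj]

end counting

section key
variable (n : ℕ) [NeZero n]

lemma prod_ite_zero (T : Finset (Fin n)) (z : Fin n → ZMod n) :
    (∏ i ∈ T, if z i = 0 then (n:ℂ) else 0)
      = if ∀ i ∈ T, z i = 0 then (n:ℂ)^T.card else 0 := by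
  by_cases h : ∀ i ∈ T, z i = 0
  · rw [if_pos h, Finset.prod_congr rfl (fun i hi => if_pos (h i hi)), Finset.prod_const]
  · rw [if_neg h]
    push_neg at h
    obtain ⟨i, hi, hzi⟩ := h
    exact Finset.prod_eq_zero hi (if_neg hzi)

lemma inner_r_sum (T : Finset (Fin n)) (z : Fin n → ZMod n) :
    ∑ r ∈ univ.filter (fun r : Fin n → ZMod n => ∀ i ∉ T, r i = 0),
      eZ n (∑ i, r i * z i)
    = if ∀ i ∈ T, z i = 0 then (n:ℂ)^T.card else 0 := by
  have hA : univ.filter (fun r : Fin n → ZMod n => ∀ i ∉ T, r i = 0)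
      = Fintype.piFinset (fun i => if i ∈ T then (univ : Finset (ZMod n)) else {0}) := by
    ext r
    simp only [Finset.mem_filter, Finset.mem_univ, true_and, Fintype.mem_piFinset]
    constructor
    · intro h i
      by_cases hi : i ∈ T
      · simp [hi]
      · simp [hi, h i hi]
    · intro h i hi
      have := h i
      simp [hi] at this
      exact this
  rw [hA, Finset.sum_congr rfl (fun r _ => eZ_sum n univ (fun i => r i * z i))]
  have hps := Finset.prod_univ_sum (fun i => if i ∈ T then (univ : Finset (ZMod n)) else {0})
    (fun i c => eZ n (c * z i))
  rw [← hps, ← Finset.prod_mul_prod_compl T]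
  have h1 : ∀ i ∈ T, (∑ c ∈ (if i ∈ T then (univ : Finset (ZMod n)) else {0}), eZ n (c * z i))
      = if z i = 0 then (n:ℂ) else 0 := by
    intro i hi
    rw [if_pos hi]
    exact sum_eZ_mul n (z i)
  have h2 : ∀ i ∈ Tᶜ, (∑ c ∈ (if i ∈ T then (univ : Finset (ZMod n)) else {0}), eZ n (c * z i))
      = 1 := by
    intro i hi
    rw [Finset.mem_compl] at hi
    rw [if_neg hi, Finset.sum_singleton, zero_mul, eZ_zero]
  rw [Finset.prod_congr rfl h1, Finset.prod_congr rfl h2, Finset.prod_const_one, mul_one,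
    prod_ite_zero]

lemma key (T : Finset (Fin n)) :
    ∑ r ∈ univ.filter (fun r : Fin n → ZMod n => ∀ i ∉ T, r i = 0),
      ‖fourierS n r‖ ^ 2
    = (n:ℝ)^T.card * n.factorial * (n - T.card).factorial / (n:ℝ)^(2*n) := by
  have hn : (n:ℂ) ≠ 0 := Nat.cast_ne_zero.mpr (NeZero.ne n)
  set S := univ.filter (fun x : Fin n → ZMod n => Function.Injective x) with hS
  set A := univ.filter (fun r : Fin n → ZMod n => ∀ i ∉ T, r i = 0) with hAdef
  -- step A : expand the product
  have stepA : ∀ r : Fin n → ZMod n,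
      fourierS n r * (starRingEnd ℂ) (fourierS n r)
      = ((n:ℂ)^n)⁻¹^2 * ∑ x ∈ S, ∑ y ∈ S, eZ n (∑ i, r i * (y i - x i)) := by
    intro r
    rw [fourierS]
    rw [map_mul, map_inv₀, map_pow, Complex.conj_natCast, map_sum]
    have hconj : ∀ x : Fin n → ZMod n,
        (starRingEnd ℂ) (eZ n (-(∑ i, r i * x i))) = eZ n (∑ i, r i * x i) := by
      intro x; rw [eZ_conj, neg_neg]
    rw [Finset.sum_congr rfl (fun x _ => hconj x)]
    rw [mul_mul_mul_comm, ← pow_two, Finset.sum_mul_sum]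
    congr 1
    apply Finset.sum_congr rfl
    intro x _
    apply Finset.sum_congr rfl
    intro y _
    rw [← eZ_add]
    congr 1
    rw [neg_add_eq_sub, ← Finset.sum_sub_distrib]
    exact Finset.sum_congr rfl fun i _ => (mul_sub _ _ _).symm
  rw [← Complex.ofReal_inj]
  have cast1 : ((∑ r ∈ A, ‖fourierS n r‖ ^ 2 : ℝ) : ℂ)
      = ∑ r ∈ A, fourierS n r * (starRingEnd ℂ) (fourierS n r) := by
    push_cast
    apply Finset.sum_congr rfl
    intro r _
    rw [← Complex.ofReal_pow, Complex.sq_norm, ← Complex.mul_conj]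
  rw [cast1, Finset.sum_congr rfl (fun r (_ : r ∈ A) => stepA r), ← Finset.mul_sum]
  have swap : ∑ r ∈ A, ∑ x ∈ S, ∑ y ∈ S, eZ n (∑ i, r i * (y i - x i))
      = ∑ x ∈ S, ∑ y ∈ S, ∑ r ∈ A, eZ n (∑ i, r i * (y i - x i)) := by
    rw [Finset.sum_comm]
    exact Finset.sum_congr rfl fun x _ => Finset.sum_comm
  rw [swap]
  have inner : ∀ x ∈ S, ∑ y ∈ S, ∑ r ∈ A, eZ n (∑ i, r i * (y i - x i))
      = (n:ℂ)^T.card * ((n - T.card).factorial : ℂ) := by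
    intro x hx
    have hxinj : Function.Injective x := (Finset.mem_filter.mp hx).2
    have e1 : ∀ y : Fin n → ZMod n, (∑ r ∈ A, eZ n (∑ i, r i * (y i - x i)))
        = if ∀ i ∈ T, y i = x i then (n:ℂ)^T.card else 0 := by
      intro y
      rw [hAdef, inner_r_sum n T (fun i => y i - x i)]
      exact if_congr (forall₂_congr fun i _ => sub_eq_zero) rfl rfl
    rw [Finset.sum_congr rfl fun y _ => e1 y]
    rw [Finset.sum_ite, Finset.sum_const, Finset.sum_const_zero, add_zero, nsmul_eq_mul]
    rw [hS, Finset.filter_filter, card_ext n T x hxinj]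
    ring
  rw [Finset.sum_congr rfl inner, Finset.sum_const, nsmul_eq_mul]
  have hcardS : (S.card : ℂ) = (n.factorial : ℂ) := by
    rw [hS, card_inj]
  rw [hcardS]
  push_cast
  have hnn : ((n:ℂ)^n) ≠ 0 := pow_ne_zero _ hn
  field_simp
  ring

end key

/-- `Q(m,n) = (n^{2n}/n!²) ∑_{m-sparse χ} |\widehat{1_S}(χ)|²`, the normalized
`L²`-mass on characters with exactly `m` nonzero coordinates. -/
noncomputable def Qmn (n m : ℕ) [NeZero n] : ℝ :=
  ((n : ℝ) ^ (2 * n) / (n.factorial : ℝ) ^ 2) *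
    ∑ r ∈ Finset.univ.filter
        (fun r : Fin n → ZMod n => (Finset.univ.filter (fun i => r i ≠ 0)).card = m),
      ‖fourierS n r‖ ^ 2

lemma delta_lemma (N M : ℕ) (hMN : M ≤ N) :
    ∑ i ∈ Finset.range (M+1), (-1:ℝ)^i * ((N-i).choose (M-i) : ℝ) * (N.choose i : ℝ)
      = if M = 0 then 1 else 0 := by
  have hterm : ∀ i ∈ Finset.range (M+1),
      (-1:ℝ)^i * ((N-i).choose (M-i) : ℝ) * (N.choose i : ℝ)
      = ((N.choose M : ℝ)) * ((-1:ℝ)^i * (M.choose i : ℝ)) := by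
    intro i hi
    rw [Finset.mem_range] at hi
    have h := Nat.choose_mul (n := N) (show i ≤ M by omega)
    have hcast : (N.choose M : ℝ) * (M.choose i : ℝ) = (N.choose i : ℝ) * ((N-i).choose (M-i) : ℝ) := by
      exact_mod_cast congrArg (Nat.cast : ℕ → ℝ) h
    linear_combination (-(-1:ℝ)^i) * hcast
  rw [Finset.sum_congr rfl hterm, ← Finset.mul_sum]
  have halt : ∑ i ∈ Finset.range (M+1), ((-1:ℝ)^i * (M.choose i : ℝ))
      = if M = 0 then 1 else 0 := by
    have := Int.alternating_sum_range_choose (n := M)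
    have hc := congrArg (Int.cast : ℤ → ℝ) this
    push_cast at hc
    rw [← hc]
  rw [halt]
  by_cases hM : M = 0
  · simp [hM]
  · simp [hM]

lemma inv_id (n m : ℕ) (hm : m ≤ n) :
    ∑ k ∈ Finset.range (m+1), ((n-k).choose (m-k) : ℝ) *
      (∑ j ∈ Finset.range (k+1),
        (-1:ℝ)^(k-j) * ((n-j).choose (k-j) : ℝ) * (n:ℝ)^j / j.factorial)
    = (n:ℝ)^m / m.factorial := by
  have expand : ∀ k, ((n-k).choose (m-k) : ℝ) *
      (∑ j ∈ Finset.range (k+1),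
        (-1:ℝ)^(k-j) * ((n-j).choose (k-j) : ℝ) * (n:ℝ)^j / j.factorial)
      = ∑ j ∈ Finset.range (k+1),
        ((n-k).choose (m-k) : ℝ) * ((-1:ℝ)^(k-j) * ((n-j).choose (k-j) : ℝ) * (n:ℝ)^j / j.factorial) := by
    intro k; rw [Finset.mul_sum]
  rw [Finset.sum_congr rfl fun k _ => expand k]
  -- swap the order of summation
  have hswap : ∑ k ∈ Finset.range (m+1), ∑ j ∈ Finset.range (k+1),
        ((n-k).choose (m-k) : ℝ) * ((-1:ℝ)^(k-j) * ((n-j).choose (k-j) : ℝ) * (n:ℝ)^j / j.factorial)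
      = ∑ j ∈ Finset.range (m+1), ∑ k ∈ Finset.Ico j (m+1),
        ((n-k).choose (m-k) : ℝ) * ((-1:ℝ)^(k-j) * ((n-j).choose (k-j) : ℝ) * (n:ℝ)^j / j.factorial) := by
    have := Finset.sum_Ico_Ico_comm 0 (m+1)
      (fun j k => ((n-k).choose (m-k) : ℝ) * ((-1:ℝ)^(k-j) * ((n-j).choose (k-j) : ℝ) * (n:ℝ)^j / j.factorial))
    rw [Finset.range_eq_Ico]
    simp only [Finset.range_eq_Ico]; exact this.symm
  rw [hswap]
  -- evaluate the inner sums via the delta lemma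
  have hinner : ∀ j ∈ Finset.range (m+1),
      (∑ k ∈ Finset.Ico j (m+1),
        ((n-k).choose (m-k) : ℝ) * ((-1:ℝ)^(k-j) * ((n-j).choose (k-j) : ℝ) * (n:ℝ)^j / j.factorial))
      = (if m - j = 0 then 1 else 0) * ((n:ℝ)^j / j.factorial) := by
    intro j hj
    rw [Finset.mem_range] at hj
    rw [Finset.sum_Ico_eq_sum_range]
    have hlen : m + 1 - j = (m - j) + 1 := by omega
    rw [hlen]
    have hterm : ∀ i ∈ Finset.range ((m-j)+1),
        ((n-(j+i)).choose (m-(j+i)) : ℝ) *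
          ((-1:ℝ)^((j+i)-j) * ((n-j).choose ((j+i)-j) : ℝ) * (n:ℝ)^j / j.factorial)
        = ((-1:ℝ)^i * (((n-j)-i).choose ((m-j)-i) : ℝ) * (((n-j)).choose i : ℝ))
            * ((n:ℝ)^j / j.factorial) := by
      intro i hi
      rw [Finset.mem_range] at hi
      have e1 : (j+i) - j = i := by omega
      have e2 : n - (j+i) = (n-j) - i := by omega
      have e3 : m - (j+i) = (m-j) - i := by omega
      rw [e1, e2, e3]
      ring
    rw [Finset.sum_congr rfl hterm, ← Finset.sum_mul,
      delta_lemma (n-j) (m-j) (by omega)]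
  rw [Finset.sum_congr rfl hinner]
  -- only the j = m term survives
  rw [Finset.sum_eq_single m]
  · simp
  · intro j hj hjm
    rw [Finset.mem_range] at hj
    rw [if_neg (by omega)]
    ring
  · intro h
    exact absurd (Finset.self_mem_range_succ m) h

section assembly
variable (n : ℕ) [NeZero n]

noncomputable def Wk (w : (Fin n → ZMod n) → ℝ) (k : ℕ) : ℝ :=
  ∑ r ∈ univ.filter (fun r : Fin n → ZMod n => (univ.filter (fun i => r i ≠ 0)).card = k), w r

theorem first_raw (m : ℕ) (hm : m ≤ n) (w : (Fin n → ZMod n) → ℝ)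
    (hkey : ∀ T : Finset (Fin n),
      ∑ r ∈ univ.filter (fun r : Fin n → ZMod n => ∀ i ∉ T, r i = 0), w r
        = (n:ℝ)^T.card * n.factorial * (n - T.card).factorial / (n:ℝ)^(2*n)) :
    (n.choose m : ℝ) * ((n:ℝ)^m * n.factorial * (n - m).factorial / (n:ℝ)^(2*n))
      = ∑ k ∈ Finset.range (m + 1), ((n - k).choose (m - k) : ℝ) * Wk n w k := by
  have lhs_eq : ∑ T ∈ (univ : Finset (Fin n)).powersetCard m,
      (∑ r ∈ univ.filter (fun r : Fin n → ZMod n => ∀ i ∉ T, r i = 0), w r)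
      = (n.choose m : ℝ) * ((n:ℝ)^m * n.factorial * (n - m).factorial / (n:ℝ)^(2*n)) := by
    have : ∀ T ∈ (univ : Finset (Fin n)).powersetCard m,
        (∑ r ∈ univ.filter (fun r : Fin n → ZMod n => ∀ i ∉ T, r i = 0), w r)
        = (n:ℝ)^m * n.factorial * (n - m).factorial / (n:ℝ)^(2*n) := by
      intro T hT
      have hTc : T.card = m := (Finset.mem_powersetCard.mp hT).2
      rw [hkey T, hTc]
    rw [Finset.sum_congr rfl this, Finset.sum_const, Finset.card_powersetCard,
      Finset.card_univ, Fintype.card_fin, nsmul_eq_mul]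
  rw [← lhs_eq]
  -- rewrite inner filter condition as support ⊆ T and swap sums
  have cond_eq : ∀ T : Finset (Fin n), ∀ r : Fin n → ZMod n,
      (∀ i ∉ T, r i = 0) ↔ (univ.filter (fun i => r i ≠ 0)) ⊆ T := by
    intro T r
    constructor
    · intro h i hi
      rw [Finset.mem_filter] at hi
      by_contra hiT
      exact hi.2 (h i hiT)
    · intro h i hiT
      by_contra hri
      exact hiT (h (Finset.mem_filter.mpr ⟨Finset.mem_univ i, hri⟩))
  have step1 : ∑ T ∈ (univ : Finset (Fin n)).powersetCard m,
      (∑ r ∈ univ.filter (fun r : Fin n → ZMod n => ∀ i ∉ T, r i = 0), w r)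
      = ∑ r : Fin n → ZMod n,
          ((((univ : Finset (Fin n)).powersetCard m).filter
            (fun T => (univ.filter (fun i => r i ≠ 0)) ⊆ T)).card : ℝ) * w r := by
    have h1 : ∀ T : Finset (Fin n),
        (∑ r ∈ univ.filter (fun r : Fin n → ZMod n => ∀ i ∉ T, r i = 0), w r)
        = ∑ r : Fin n → ZMod n,
            if (univ.filter (fun i => r i ≠ 0)) ⊆ T then w r else 0 := by
      intro T
      rw [Finset.sum_filter]
      exact Finset.sum_congr rfl fun r _ => if_congr (cond_eq T r) rfl rfl
    rw [Finset.sum_congr rfl fun T _ => h1 T, Finset.sum_comm]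
    apply Finset.sum_congr rfl
    intro r _
    rw [Finset.sum_ite, Finset.sum_const, Finset.sum_const_zero, add_zero, nsmul_eq_mul]
  rw [step1]
  -- fiberwise by support cardinality
  have step2 : ∑ r : Fin n → ZMod n,
      ((((univ : Finset (Fin n)).powersetCard m).filter
        (fun T => (univ.filter (fun i => r i ≠ 0)) ⊆ T)).card : ℝ) * w r
      = ∑ k ∈ Finset.range (n+1), ∑ r ∈ univ.filter
          (fun r : Fin n → ZMod n => (univ.filter (fun i => r i ≠ 0)).card = k),
          ((((univ : Finset (Fin n)).powersetCard m).filter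
            (fun T => (univ.filter (fun i => r i ≠ 0)) ⊆ T)).card : ℝ) * w r := by
    rw [Finset.sum_fiberwise_of_maps_to]
    intro r _
    rw [Finset.mem_range]
    have := Finset.card_le_card (Finset.filter_subset (fun i => r i ≠ 0) univ)
    simp only [Finset.card_univ, Fintype.card_fin] at this
    omega
  rw [step2]
  -- evaluate the coefficient on each fiber
  have step3 : ∀ k ∈ Finset.range (n+1),
      (∑ r ∈ univ.filter
          (fun r : Fin n → ZMod n => (univ.filter (fun i => r i ≠ 0)).card = k),
          ((((univ : Finset (Fin n)).powersetCard m).filter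
            (fun T => (univ.filter (fun i => r i ≠ 0)) ⊆ T)).card : ℝ) * w r)
      = if k ≤ m then ((n - k).choose (m - k) : ℝ) * Wk n w k else 0 := by
    intro k _
    by_cases hk : k ≤ m
    · rw [if_pos hk, Wk, Finset.mul_sum]
      apply Finset.sum_congr rfl
      intro r hr
      rw [Finset.mem_filter] at hr
      rw [card_supersets n m _ (hr.2 ▸ hk), hr.2]
    · rw [if_neg hk]
      apply Finset.sum_eq_zero
      intro r hr
      rw [Finset.mem_filter] at hr
      have : (((univ : Finset (Fin n)).powersetCard m).filter
          (fun T => (univ.filter (fun i => r i ≠ 0)) ⊆ T)) = ∅ := by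
        rw [Finset.filter_eq_empty_iff]
        intro T hT hsub
        have h1 := Finset.card_le_card hsub
        rw [hr.2, (Finset.mem_powersetCard.mp hT).2] at h1
        omega
      rw [this]
      simp
  rw [Finset.sum_congr rfl step3]
  rw [← Finset.sum_subset (Finset.range_subset_range.mpr (by omega : m + 1 ≤ n + 1))
    (fun k _ hk => by rw [if_neg (by simp at hk ⊢; omega)])]
  apply Finset.sum_congr rfl
  intro k hk
  rw [if_pos (by simp at hk; omega)]

end assembly

/-- `n^m/m! = ∑_{k≤m} C(n−k,m−k) Q(k,n)`, and by inversion
`Q(m,n) = ∑_{k≤m} (−1)^{m−k} C(n−k,m−k) n^k/k!`. -/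
theorem Qmn_identities (n m : ℕ) [NeZero n] (hm : m ≤ n) :
    ((n : ℝ) ^ m / m.factorial =
        ∑ k ∈ Finset.range (m + 1), (Nat.choose (n - k) (m - k) : ℝ) * Qmn n k) ∧
      Qmn n m = ∑ k ∈ Finset.range (m + 1),
        (-1 : ℝ) ^ (m - k) * (Nat.choose (n - k) (m - k) : ℝ) * (n : ℝ) ^ k / k.factorial := by
  set w : (Fin n → ZMod n) → ℝ := fun r => ‖fourierS n r‖ ^ 2 with hw
  have hQW : ∀ k : ℕ, Qmn n k
      = ((n : ℝ) ^ (2 * n) / (n.factorial : ℝ) ^ 2) * Wk n w k := fun k => rfl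
  have hnR : (0:ℝ) < (n:ℝ) := by
    have := NeZero.pos n
    exact_mod_cast this
  have hfac : ((n.factorial : ℝ)) ≠ 0 := by
    exact_mod_cast n.factorial_ne_zero
  have hpow : ((n:ℝ)^(2*n)) ≠ 0 := pow_ne_zero _ (ne_of_gt hnR)
  have first : ∀ m' : ℕ, m' ≤ n →
      (n : ℝ) ^ m' / m'.factorial =
        ∑ k ∈ Finset.range (m' + 1), (Nat.choose (n - k) (m' - k) : ℝ) * Qmn n k := by
    intro m' hm'
    have hraw := first_raw n m' hm' w (fun T => key n T)
    have hsum : ∑ k ∈ Finset.range (m' + 1), (Nat.choose (n - k) (m' - k) : ℝ) * Qmn n k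
        = ((n : ℝ) ^ (2 * n) / (n.factorial : ℝ) ^ 2) *
          ∑ k ∈ Finset.range (m' + 1), (Nat.choose (n - k) (m' - k) : ℝ) * Wk n w k := by
      rw [Finset.mul_sum]
      exact Finset.sum_congr rfl fun k _ => by rw [hQW k]; ring
    rw [hsum, ← hraw]
    have hfacm : ((m'.factorial : ℝ)) ≠ 0 := by exact_mod_cast m'.factorial_ne_zero
    have hc : ((n.choose m' : ℝ)) * m'.factorial * (n - m').factorial = n.factorial := by
      exact_mod_cast congrArg (Nat.cast : ℕ → ℝ) (Nat.choose_mul_factorial_mul_factorial hm')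
    field_simp
    linear_combination -hc
  have second : ∀ m' : ℕ, m' ≤ n → Qmn n m' = ∑ k ∈ Finset.range (m' + 1),
      (-1 : ℝ) ^ (m' - k) * (Nat.choose (n - k) (m' - k) : ℝ) * (n : ℝ) ^ k / k.factorial := by
    intro m'
    induction m' using Nat.strong_induction_on with
    | _ m' ih =>
      intro hm'
      have h1 := first m' hm'
      have h2 := inv_id n m' hm'
      rw [Finset.sum_range_succ] at h1 h2
      simp only [Nat.sub_self, Nat.choose_zero_right, Nat.cast_one, one_mul] at h1 h2
      have h3 : ∑ k ∈ Finset.range m', (Nat.choose (n - k) (m' - k) : ℝ) * Qmn n k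
          = ∑ k ∈ Finset.range m', (Nat.choose (n - k) (m' - k) : ℝ) *
              (∑ j ∈ Finset.range (k+1),
                (-1:ℝ)^(k-j) * ((n-j).choose (k-j) : ℝ) * (n:ℝ)^j / j.factorial) := by
        apply Finset.sum_congr rfl
        intro k hk
        rw [ih k (Finset.mem_range.mp hk) (le_trans (le_of_lt (Finset.mem_range.mp hk)) hm')]
      linarith [h1, h2, h3]
  exact ⟨first m hm, second m hm⟩
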